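/- The generating function G(x,z,u,v) of refined shapes, defined by the system G = G^{RC}·(1+z) + (1+z), G^{RC} = G·G^C, G^C = G^▽ + G^△ + G^□ with G^▽ = G^△ = xzu + x·G^{DT}, G^□ = x²zv + x²·G^{DT}, and G^{DT} = G − (1+z) − G^C, satisfies the quadratic equation x(x+2)(z+1)·G² − (x(x+2)(z+1)² + (x+1)² − (2xu + x²v)z(z+1))·G + (x+1)²(z+1) = 0. -/
import Mathlib


open MvPowerSeries

noncomputable section

def xV : MvPowerSeries (Fin 4) ℚ := MvPowerSeries.X 0
def zV : MvPowerSeries (Fin 4) ℚ := MvPowerSeries.X 1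
def uV : MvPowerSeries (Fin 4) ℚ := MvPowerSeries.X 2
def vV : MvPowerSeries (Fin 4) ℚ := MvPowerSeries.X 3

/-- If `G, G^{RC}, G^{C}, G^{▽}, G^{△}, G^{□}, G^{DT}` satisfy the shape
grammar system, then `G` satisfies the quadratic equation
`x(x+2)(z+1)G² − (x(x+2)(z+1)² + (x+1)² − (2xu + x²v)z(z+1))G + (x+1)²(z+1) = 0`. -/
theorem shape_grammar_implies_quadratic
    (G GRC GC Gdown Gup Gsq GDT : MvPowerSeries (Fin 4) ℚ)
    (h1 : G = GRC * (1 + zV) + (1 + zV))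
    (h2 : GRC = G * GC)
    (h3 : GC = Gdown + Gup + Gsq)
    (h4 : Gdown = xV * zV * uV + xV * GDT)
    (h5 : Gup = xV * zV * uV + xV * GDT)
    (h6 : Gsq = xV ^ 2 * zV * vV + xV ^ 2 * GDT)
    (h7 : GDT = G - (1 + zV) - GC) :
    xV * (xV + 2) * (zV + 1) * G ^ 2
      - (xV * (xV + 2) * (zV + 1) ^ 2 + (xV + 1) ^ 2
          - (2 * xV * uV + xV ^ 2 * vV) * (zV * (zV + 1))) * G
      + (xV + 1) ^ 2 * (zV + 1) = 0 := by
  linear_combination (-(xV + 1) ^ 2) * h1 + (-(xV + 1) ^ 2 * (zV + 1)) * h2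
    + (-(G * (zV + 1))) * (h3 + h4 + h5 + h6)
    + (-(G * (zV + 1)) * (xV * (xV + 2))) * h7

end
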